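/- Let T > 0 and let α : [0,T] → ℝ be continuously differentiable with 0 < α(z) for all z ∈ [0,T], sup_{z∈[0,T]} α(z) < α* for some α* < 1, and |α'(z)| ≤ M for all z ∈ [0,T]. Define ψ(x) = Γ'(x)/Γ(x) (the logarithmic derivative of the Euler Gamma function) and, for t ∈ (0,T], g̃(t) = ∫_0^t (t^{−α(z)}/Γ(1−α(z))) [ −α'(z) ln t + ψ(1−α(z)) (1−α(z)) α'(z)/(1−α(z)) ] dz, i.e. g̃(t) = ∫_0^t (t^{−α(z)}/Γ(1−α(z))) [ −α'(z) ln t + ψ(1−α(z)) α'(z) ] dz (the kernel arising from the perturbation reformulation). Then g̃(t) → 0 as t → 0⁺, g̃ is differentiable on (0,T], and there exists a constant C > 0 such that |g̃'(t)| ≤ C t^{−α*} for all t ∈ (0,T]. -/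

import Mathlib

open MeasureTheory intervalIntegral Set Filter Topology

/-- The logarithmic derivative `ψ = Γ'/Γ` of the Euler Gamma function. -/
noncomputable def psiGamma (x : ℝ) : ℝ := deriv Real.Gamma x / Real.Gamma x

/-- The kernel `g̃` arising from the perturbation reformulation of the
variable-exponent subdiffusion equation. -/
noncomputable def gtilde (α α' : ℝ → ℝ) (t : ℝ) : ℝ :=
  ∫ z in (0:ℝ)..t, (t ^ (-(α z)) / Real.Gamma (1 - α z)) *
    (-(α' z) * Real.log t + psiGamma (1 - α z) * α' z)

lemma gamma_ne_neg_nat {x : ℝ} (hx : 0 < x) : ∀ m : ℕ, x ≠ -m := by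
  intro m hm; have : (0:ℝ) ≤ m := Nat.cast_nonneg m; rw [hm] at hx; linarith

lemma contOn_derivGamma : ContinuousOn (deriv Real.Gamma) (Set.Ioi 0) := by
  have hV : IsOpen {s : ℂ | 0 < s.re} := isOpen_lt continuous_const Complex.continuous_re
  have hne : ∀ s : ℂ, 0 < s.re → ∀ m : ℕ, s ≠ -m := by
    intro s hs m hsm
    rw [hsm] at hs
    simp at hs
    have : (0:ℝ) ≤ m := Nat.cast_nonneg m; linarith
  have hdiff : DifferentiableOn ℂ Complex.Gamma {s : ℂ | 0 < s.re} := fun s hs =>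
    (Complex.differentiableAt_Gamma s (hne s hs)).differentiableWithinAt
  have han : AnalyticOnNhd ℂ Complex.Gamma {s : ℂ | 0 < s.re} :=
    hdiff.analyticOnNhd hV
  have hcd : ContinuousOn (deriv Complex.Gamma) {s : ℂ | 0 < s.re} :=
    han.deriv.continuousOn
  have heq : ∀ x ∈ Set.Ioi (0:ℝ), deriv Real.Gamma x = (deriv Complex.Gamma x).re := by
    intro x hx
    have h1 : HasDerivAt Complex.Gamma (deriv Complex.Gamma x) x :=
      (Complex.differentiableAt_Gamma x (hne x (by simpa using hx))).hasDerivAt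
    have h2 := h1.real_of_complex
    have h3 : (fun y : ℝ => (Complex.Gamma (y : ℂ)).re) = Real.Gamma := by
      funext y; rw [Complex.Gamma_ofReal, Complex.ofReal_re]
    rw [h3] at h2
    exact h2.deriv
  apply ContinuousOn.congr _ heq
  exact Complex.continuous_re.comp_continuousOn
    (hcd.comp (Complex.continuous_ofReal.continuousOn) (fun x hx => by simpa using hx))

lemma key_deriv {α α' : ℝ → ℝ} {t z : ℝ} (ht : 0 < t)
    (hd : HasDerivAt α (α' z) z) (ha : α z < 1) :
    HasDerivAt (fun z => t ^ (-(α z)) / Real.Gamma (1 - α z))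
      ((t ^ (-(α z)) / Real.Gamma (1 - α z)) *
        (-(α' z) * Real.log t + psiGamma (1 - α z) * α' z)) z := by
  have hGpos : 0 < Real.Gamma (1 - α z) := Real.Gamma_pos_of_pos (by linarith)
  have hGne : Real.Gamma (1 - α z) ≠ 0 := hGpos.ne'
  have hu : HasDerivAt (fun z => Real.exp (Real.log t * (-(α z))))
      (Real.exp (Real.log t * (-(α z))) * (Real.log t * (-(α' z)))) z :=
    (hd.neg.const_mul (Real.log t)).exp
  have hin : HasDerivAt (fun z => 1 - α z) (-(α' z)) z := by
    exact hd.const_sub 1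
  have hG : HasDerivAt Real.Gamma (deriv Real.Gamma (1 - α z)) (1 - α z) :=
    (Real.differentiableAt_Gamma (gamma_ne_neg_nat (by linarith))).hasDerivAt
  have hv : HasDerivAt (fun z => Real.Gamma (1 - α z))
      (deriv Real.Gamma (1 - α z) * (-(α' z))) z := by
    have h := HasDerivAt.comp z hG hin; exact h
  have hdiv := hu.div hv hGne
  have hrw : ∀ y, Real.exp (Real.log t * (-(α y))) = t ^ (-(α y)) := fun y =>
    (Real.rpow_def_of_pos ht _).symm
  have hfun : (fun z => Real.exp (Real.log t * (-(α z))) / Real.Gamma (1 - α z))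
      = (fun z => t ^ (-(α z)) / Real.Gamma (1 - α z)) := by
    funext y; rw [hrw y]
  rw [Pi.div_def, hfun] at hdiv
  refine hdiv.congr_deriv ?_
  rw [hrw z, psiGamma]
  field_simp
  ring

lemma keyL {T αstar abar : ℝ} (hT : 0 < T) (habar : abar < αstar) (hαstar1 : αstar ≤ 1) :
    ∃ C > 0, ∀ t ∈ Set.Ioc (0:ℝ) T, ∀ a : ℝ, 0 ≤ a → a ≤ abar →
      t ^ (-a) * (1 + |Real.log t|) ≤ C * t ^ (-αstar) := by
  set δ := αstar - abar with hδdef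
  have hδ : 0 < δ := by simp only [hδdef]; linarith
  refine ⟨(1 + 2/δ) + T*(1+T), by positivity, ?_⟩
  intro t ht a ha0 haabar
  have ht0 : 0 < t := ht.1
  have hsplit : t ^ (-a) = t ^ (-αstar) * t ^ (αstar - a) := by
    rw [← Real.rpow_add ht0]; ring_nf
  have he1 : δ ≤ αstar - a := by simp only [hδdef]; linarith
  have he2 : αstar - a ≤ 1 := by linarith
  have hkey : t ^ (αstar - a) * (1 + |Real.log t|) ≤ (1 + 2/δ) + T*(1+T) := by
    have hTT : 0 ≤ T*(1+T) := by positivity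
    have h2δ : 0 ≤ 2 / δ := by positivity
    rcases le_or_gt t 1 with h1 | h1
    · have hlog : |Real.log t| = -Real.log t := abs_of_nonpos (Real.log_nonpos ht0.le h1)
      have hlb : -Real.log t ≤ (2/δ) * t ^ (-(δ/2)) := by
        have h2 := Real.log_le_sub_one_of_pos (Real.rpow_pos_of_pos ht0 (-(δ/2)))
        rw [Real.log_rpow ht0] at h2
        have h3 : 0 < t ^ (-(δ/2)) := Real.rpow_pos_of_pos ht0 _
        calc -Real.log t = (2/δ) * (-(δ/2) * Real.log t) := by
              field_simp
          _ ≤ (2/δ) * (t ^ (-(δ/2)) - 1) := mul_le_mul_of_nonneg_left h2 h2δ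
          _ ≤ (2/δ) * t ^ (-(δ/2)) :=
              mul_le_mul_of_nonneg_left (by linarith) h2δ
      have h4 : t ^ (αstar - a) ≤ 1 := Real.rpow_le_one ht0.le h1 (by linarith)
      have h5 : t ^ (αstar - a) * t ^ (-(δ/2)) = t ^ (αstar - a - δ/2) := by
        rw [← Real.rpow_add ht0]; ring_nf
      have h6 : t ^ (αstar - a - δ/2) ≤ 1 := Real.rpow_le_one ht0.le h1 (by linarith)
      have h7 : 0 ≤ t ^ (αstar - a) := (Real.rpow_pos_of_pos ht0 _).le
      have h8 := mul_le_mul_of_nonneg_left hlb h7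
      rw [hlog]
      nlinarith [h8, h5, h4, h6]
    · have hlog : |Real.log t| = Real.log t := abs_of_nonneg (Real.log_nonneg h1.le)
      have hl2 : Real.log t ≤ T := (Real.log_le_sub_one_of_pos ht0).trans (by linarith [ht.2])
      have h4 : t ^ (αstar - a) ≤ t ^ (1:ℝ) := Real.rpow_le_rpow_of_exponent_le h1.le he2
      rw [Real.rpow_one] at h4
      have h5 : t ≤ T := ht.2
      have h7 : 0 < t ^ (αstar - a) := Real.rpow_pos_of_pos ht0 _
      have h8 : t ^ (αstar - a) * Real.log t ≤ T * T :=
        mul_le_mul (h4.trans h5) hl2 (Real.log_nonneg h1.le) hT.le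
      rw [hlog]
      nlinarith [h8, h4, h5]
  have hpos : 0 ≤ t ^ (-αstar) := (Real.rpow_pos_of_pos ht0 _).le
  calc t ^ (-a) * (1 + |Real.log t|)
      = t ^ (-αstar) * (t ^ (αstar - a) * (1 + |Real.log t|)) := by rw [hsplit]; ring
    _ ≤ t ^ (-αstar) * ((1 + 2/δ) + T*(1+T)) := mul_le_mul_of_nonneg_left hkey hpos
    _ = ((1 + 2/δ) + T*(1+T)) * t ^ (-αstar) := mul_comm _ _

lemma key_deriv_t {α α' : ℝ → ℝ} {t : ℝ} (ht : 0 < t)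
    (hd : HasDerivAt α (α' t) t) (ha : α t < 1) :
    HasDerivAt (fun s => s ^ (-(α s)) / Real.Gamma (1 - α s))
      ((t ^ (-(α t)) / Real.Gamma (1 - α t)) *
        (-(α' t) * Real.log t - α t / t + psiGamma (1 - α t) * α' t)) t := by
  have hGpos : 0 < Real.Gamma (1 - α t) := Real.Gamma_pos_of_pos (by linarith)
  have hGne : Real.Gamma (1 - α t) ≠ 0 := hGpos.ne'
  have hu : HasDerivAt (fun s => Real.exp (-(α s) * Real.log s))
      (Real.exp (-(α t) * Real.log t) * (-(α' t) * Real.log t + -(α t) * t⁻¹)) t :=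
    ((hd.neg.mul (Real.hasDerivAt_log ht.ne'))).exp
  have hin : HasDerivAt (fun s => 1 - α s) (-(α' t)) t := by
    exact hd.const_sub 1
  have hG : HasDerivAt Real.Gamma (deriv Real.Gamma (1 - α t)) (1 - α t) :=
    (Real.differentiableAt_Gamma (gamma_ne_neg_nat (by linarith))).hasDerivAt
  have hv : HasDerivAt (fun s => Real.Gamma (1 - α s))
      (deriv Real.Gamma (1 - α t) * (-(α' t))) t := by
    have h := HasDerivAt.comp t hG hin; exact h
  have hdiv := hu.div hv hGne
  have heq : (fun s => s ^ (-(α s)) / Real.Gamma (1 - α s)) =ᶠ[nhds t]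
      (fun s => Real.exp (-(α s) * Real.log s) / Real.Gamma (1 - α s)) := by
    filter_upwards [Ioi_mem_nhds ht] with s hs
    rw [Real.rpow_def_of_pos hs, mul_comm]
  have hfinal := hdiv.congr_of_eventuallyEq heq
  refine hfinal.congr_deriv ?_
  have hrw : Real.exp (-(α t) * Real.log t) = t ^ (-(α t)) := by
    rw [Real.rpow_def_of_pos ht, mul_comm]
  rw [hrw, psiGamma]
  field_simp
  ring

theorem stmt_0 (T αstar M : ℝ) (hT : 0 < T) (hαstar : αstar < 1)
    (α α' : ℝ → ℝ)
    (hderiv : ∀ z ∈ Set.Icc (0:ℝ) T, HasDerivAt α (α' z) z)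
    (hcont : ContinuousOn α' (Set.Icc 0 T))
    (hpos : ∀ z ∈ Set.Icc (0:ℝ) T, 0 < α z)
    (hsup : ∀ z ∈ Set.Icc (0:ℝ) T, α z < αstar)
    (hM : ∀ z ∈ Set.Icc (0:ℝ) T, |α' z| ≤ M) :
    Filter.Tendsto (gtilde α α') (nhdsWithin 0 (Set.Ioi 0)) (nhds 0) ∧
    DifferentiableOn ℝ (gtilde α α') (Set.Ioc 0 T) ∧
    ∃ C > 0, ∀ t ∈ Set.Ioc (0:ℝ) T,
      |derivWithin (gtilde α α') (Set.Ioc 0 T) t| ≤ C * t ^ (-αstar) := by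
  have h0T : (0:ℝ) ∈ Icc (0:ℝ) T := ⟨le_rfl, hT.le⟩
  have hM0 : 0 ≤ M := (abs_nonneg _).trans (hM 0 h0T)
  have hαstar0 : 0 < αstar := lt_trans (hpos 0 h0T) (hsup 0 h0T)
  have hαc : ContinuousOn α (Icc 0 T) := fun z hz =>
    (hderiv z hz).continuousAt.continuousWithinAt
  -- max of α
  obtain ⟨z₀, hz₀, hmax⟩ := isCompact_Icc.exists_isMaxOn ⟨0, h0T⟩ hαc
  have hᾱ : α z₀ < αstar := hsup z₀ hz₀
  have h1α : ∀ z ∈ Icc (0:ℝ) T, 0 < 1 - α z := fun z hz => by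
    linarith [hsup z hz]
  -- continuity facts
  have hΓc : ContinuousOn (fun z => Real.Gamma (1 - α z)) (Icc 0 T) := by
    intro z hz
    have h1 : ContinuousWithinAt (fun z => 1 - α z) (Icc 0 T) z :=
      (continuousOn_const.sub hαc) z hz
    show ContinuousWithinAt (Real.Gamma ∘ fun z => 1 - α z) (Icc 0 T) z
    exact ContinuousAt.comp_continuousWithinAt (f := fun z => 1 - α z) (x := z)
      ((Real.differentiableAt_Gamma (gamma_ne_neg_nat (h1α z hz))).continuousAt) h1
  have hΓpos : ∀ z ∈ Icc (0:ℝ) T, 0 < Real.Gamma (1 - α z) := fun z hz =>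
    Real.Gamma_pos_of_pos (h1α z hz)
  have hΓne : ∀ z ∈ Icc (0:ℝ) T, Real.Gamma (1 - α z) ≠ 0 := fun z hz => (hΓpos z hz).ne'
  have hψc : ContinuousOn (fun z => psiGamma (1 - α z)) (Icc 0 T) := by
    apply ContinuousOn.div
    · exact contOn_derivGamma.comp (continuousOn_const.sub hαc) (fun z hz => h1α z hz)
    · exact hΓc
    · exact hΓne
  have hPc : ∀ t : ℝ, 0 < t →
      ContinuousOn (fun z => t ^ (-(α z)) / Real.Gamma (1 - α z)) (Icc 0 T) := by
    intro t ht
    apply ContinuousOn.congr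
      (f := fun z => Real.exp (Real.log t * (-(α z))) / Real.Gamma (1 - α z))
    · exact (Real.continuous_exp.comp_continuousOn (continuousOn_const.mul hαc.neg)).div hΓc hΓne
    · intro z hz
      show t ^ (-(α z)) / Real.Gamma (1 - α z) =
        Real.exp (Real.log t * (-(α z))) / Real.Gamma (1 - α z)
      rw [Real.rpow_def_of_pos ht]
  have hQc : ∀ t : ℝ, 0 < t →
      ContinuousOn (fun z => (t ^ (-(α z)) / Real.Gamma (1 - α z)) *
        (-(α' z) * Real.log t + psiGamma (1 - α z) * α' z)) (Icc 0 T) := fun t ht =>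
    (hPc t ht).mul ((hcont.neg.mul continuousOn_const).add (hψc.mul hcont))
  -- FTC identity
  have hFTC : ∀ t ∈ Ioc (0:ℝ) T, gtilde α α' t =
      t ^ (-(α t)) / Real.Gamma (1 - α t) - t ^ (-(α 0)) / Real.Gamma (1 - α 0) := by
    intro t ht
    have hsub : Icc (0:ℝ) t ⊆ Icc 0 T := Icc_subset_Icc le_rfl ht.2
    have h1 : ∀ z ∈ uIcc (0:ℝ) t,
        HasDerivAt (fun z => t ^ (-(α z)) / Real.Gamma (1 - α z))
          ((t ^ (-(α z)) / Real.Gamma (1 - α z)) *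
            (-(α' z) * Real.log t + psiGamma (1 - α z) * α' z)) z := by
      intro z hz
      rw [uIcc_of_le ht.1.le] at hz
      exact key_deriv ht.1 (hderiv z (hsub hz)) (lt_trans (hsup z (hsub hz)) hαstar)
    have h2 : IntervalIntegrable (fun z => (t ^ (-(α z)) / Real.Gamma (1 - α z)) *
        (-(α' z) * Real.log t + psiGamma (1 - α z) * α' z)) volume 0 t :=
      ((hQc t ht.1).mono (by rw [uIcc_of_le ht.1.le]; exact hsub)).intervalIntegrable
    exact intervalIntegral.integral_eq_sub_of_hasDerivAt h1 h2
  -- bounds by compactness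
  obtain ⟨B₁, hB₁⟩ := isCompact_Icc.exists_bound_of_continuousOn (hΓc.inv₀ hΓne)
  obtain ⟨B₂, hB₂⟩ := isCompact_Icc.exists_bound_of_continuousOn hψc
  have hB₁0 : 0 ≤ B₁ := (norm_nonneg _).trans (hB₁ 0 h0T)
  have hB₂0 : 0 ≤ B₂ := (norm_nonneg _).trans (hB₂ 0 h0T)
  obtain ⟨CL, hCL0, hCL⟩ := keyL hT hᾱ hαstar.le
  have hLb : ∀ t ∈ Ioc (0:ℝ) T, ∀ z ∈ Icc (0:ℝ) T,
      t ^ (-(α z)) * (1 + |Real.log t|) ≤ CL * t ^ (-αstar) := fun t ht z hz =>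
    hCL t ht (α z) (hpos z hz).le (hmax hz)
  have hPb : ∀ t ∈ Ioc (0:ℝ) T, ∀ z ∈ Icc (0:ℝ) T,
      t ^ (-(α z)) / Real.Gamma (1 - α z) ≤ B₁ * t ^ (-(α z)) := by
    intro t ht z hz
    have h3 : (Real.Gamma (1 - α z))⁻¹ ≤ B₁ := by
      have h := hB₁ z hz
      simp only [Pi.inv_apply] at h
      rwa [Real.norm_eq_abs, abs_of_pos (inv_pos.2 (hΓpos z hz))] at h
    rw [div_eq_mul_inv, mul_comm B₁]
    exact mul_le_mul_of_nonneg_left h3 (Real.rpow_pos_of_pos ht.1 _).le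
  set K₁ := B₁ * (M * (1 + B₂)) with hK₁def
  have hK₁0 : 0 ≤ K₁ := mul_nonneg hB₁0 (mul_nonneg hM0 (by linarith))
  have hQb : ∀ t ∈ Ioc (0:ℝ) T, ∀ z ∈ Icc (0:ℝ) T,
      |(t ^ (-(α z)) / Real.Gamma (1 - α z)) *
        (-(α' z) * Real.log t + psiGamma (1 - α z) * α' z)| ≤ K₁ * (CL * t ^ (-αstar)) := by
    intro t ht z hz
    have hPpos : 0 < t ^ (-(α z)) / Real.Gamma (1 - α z) :=
      div_pos (Real.rpow_pos_of_pos ht.1 _) (hΓpos z hz)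
    have e1 : |(-(α' z) * Real.log t + psiGamma (1 - α z) * α' z)| ≤
        M * |Real.log t| + B₂ * M := by
      refine (abs_add_le _ _).trans ?_
      rw [abs_mul, abs_mul, abs_neg]
      refine add_le_add (mul_le_mul_of_nonneg_right (hM z hz) (abs_nonneg _)) ?_
      exact mul_le_mul (by simpa [Real.norm_eq_abs] using hB₂ z hz) (hM z hz)
        (abs_nonneg _) hB₂0
    have e2 : M * |Real.log t| + B₂ * M ≤ (M * (1 + B₂)) * (1 + |Real.log t|) := by
      nlinarith [abs_nonneg (Real.log t), hM0, hB₂0,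
        mul_nonneg (mul_nonneg hB₂0 hM0) (abs_nonneg (Real.log t))]
    calc |(t ^ (-(α z)) / Real.Gamma (1 - α z)) *
        (-(α' z) * Real.log t + psiGamma (1 - α z) * α' z)|
        = (t ^ (-(α z)) / Real.Gamma (1 - α z)) *
          |(-(α' z) * Real.log t + psiGamma (1 - α z) * α' z)| := by
          rw [abs_mul, abs_of_pos hPpos]
      _ ≤ (B₁ * t ^ (-(α z))) * ((M * (1 + B₂)) * (1 + |Real.log t|)) := by
          exact mul_le_mul (hPb t ht z hz) (e1.trans e2) (abs_nonneg _)
            (mul_nonneg hB₁0 (Real.rpow_pos_of_pos ht.1 _).le)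
      _ = K₁ * (t ^ (-(α z)) * (1 + |Real.log t|)) := by rw [hK₁def]; ring
      _ ≤ K₁ * (CL * t ^ (-αstar)) := mul_le_mul_of_nonneg_left (hLb t ht z hz) hK₁0
  -- Part 1 : tendsto
  have part1 : Filter.Tendsto (gtilde α α') (nhdsWithin 0 (Set.Ioi 0)) (nhds 0) := by
    have hb : ∀ t ∈ Ioc (0:ℝ) T, |gtilde α α' t| ≤ (K₁ * CL) * t ^ (1 - αstar) := by
      intro t ht
      have hbnd := intervalIntegral.norm_integral_le_of_norm_le_const
        (C := K₁ * (CL * t ^ (-αstar)))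
        (f := fun z => (t ^ (-(α z)) / Real.Gamma (1 - α z)) *
          (-(α' z) * Real.log t + psiGamma (1 - α z) * α' z))
        (a := (0:ℝ)) (b := t) ?_
      · rw [Real.norm_eq_abs] at hbnd
        calc |gtilde α α' t| ≤ K₁ * (CL * t ^ (-αstar)) * |t - 0| := hbnd
          _ = (K₁ * CL) * t ^ (1 - αstar) := by
              rw [sub_zero, abs_of_pos ht.1,
                show (1:ℝ) - αstar = -αstar + 1 by ring, Real.rpow_add ht.1,
                Real.rpow_one]
              ring
      · intro z hz
        rw [uIoc_of_le ht.1.le] at hz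
        rw [Real.norm_eq_abs]
        exact hQb t ht z ⟨hz.1.le, hz.2.trans ht.2⟩
    have h2 : Tendsto (fun t : ℝ => (K₁ * CL) * t ^ (1 - αstar)) (nhdsWithin 0 (Ioi 0))
        (nhds 0) := by
      have h3 : Tendsto (fun t : ℝ => t ^ (1 - αstar)) (nhds 0) (nhds 0) := by
        have hc := (Real.continuousAt_rpow_const 0 (1 - αstar) (Or.inr (by linarith))).tendsto
        simpa [Real.zero_rpow (by linarith : (1:ℝ) - αstar ≠ 0)] using hc
      simpa using ((h3.mono_left nhdsWithin_le_nhds).const_mul (K₁ * CL))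
    apply squeeze_zero_norm' _ h2
    filter_upwards [Ioc_mem_nhdsGT hT] with t ht
    rw [Real.norm_eq_abs]
    exact hb t ht
  -- Part 2 : differentiability, with explicit derivative D
  have hGd : ∀ t ∈ Ioc (0:ℝ) T, HasDerivAt
      (fun s => s ^ (-(α s)) / Real.Gamma (1 - α s) - s ^ (-(α 0)) / Real.Gamma (1 - α 0))
      ((t ^ (-(α t)) / Real.Gamma (1 - α t)) *
        (-(α' t) * Real.log t - α t / t + psiGamma (1 - α t) * α' t) -
        (-(α 0)) * t ^ (-(α 0) - 1) / Real.Gamma (1 - α 0)) t := by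
    intro t ht
    have htT : t ∈ Icc (0:ℝ) T := ⟨ht.1.le, ht.2⟩
    have h1 := key_deriv_t ht.1 (hderiv t htT) (lt_trans (hsup t htT) hαstar)
    have h2 : HasDerivAt (fun s : ℝ => s ^ (-(α 0)) / Real.Gamma (1 - α 0))
        ((-(α 0)) * t ^ (-(α 0) - 1) / Real.Gamma (1 - α 0)) t :=
      (Real.hasDerivAt_rpow_const (p := -(α 0)) (Or.inl ht.1.ne')).div_const _
    exact h1.sub h2
  have hgd : ∀ t ∈ Ioc (0:ℝ) T, HasDerivWithinAt (gtilde α α')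
      ((t ^ (-(α t)) / Real.Gamma (1 - α t)) *
        (-(α' t) * Real.log t - α t / t + psiGamma (1 - α t) * α' t) -
        (-(α 0)) * t ^ (-(α 0) - 1) / Real.Gamma (1 - α 0)) (Ioc 0 T) t := fun t ht =>
    ((hGd t ht).hasDerivWithinAt).congr (fun y hy => hFTC y hy) (hFTC t ht)
  have part2 : DifferentiableOn ℝ (gtilde α α') (Ioc 0 T) := fun t ht =>
    (hgd t ht).differentiableWithinAt
  refine ⟨part1, part2, ?_⟩
  -- Part 3 : derivative bound
  refine ⟨K₁ * CL + M * B₁ * CL + K₁ * CL + 1, by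
    have q1 := mul_nonneg hK₁0 hCL0.le
    have q2 := mul_nonneg (mul_nonneg hM0 hB₁0) hCL0.le
    linarith, ?_⟩
  intro t ht
  rw [(hgd t ht).derivWithin (uniqueDiffOn_Ioc 0 T t ht)]
  have ht0 : 0 < t := ht.1
  have htT : t ∈ Icc (0:ℝ) T := ⟨ht.1.le, ht.2⟩
  have hsub : Icc (0:ℝ) t ⊆ Icc 0 T := Icc_subset_Icc le_rfl ht.2
  -- MVT for H s = α s * (t^(-α s)/Γ(1-α s))
  obtain ⟨ξ, hξ, hslope⟩ := exists_hasDerivAt_eq_slope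
    (fun s => α s * (t ^ (-(α s)) / Real.Gamma (1 - α s)))
    (fun z => α' z * (t ^ (-(α z)) / Real.Gamma (1 - α z)) +
      α z * ((t ^ (-(α z)) / Real.Gamma (1 - α z)) *
        (-(α' z) * Real.log t + psiGamma (1 - α z) * α' z))) ht0
    ((hαc.mul (hPc t ht0)).mono hsub)
    (fun z hz => (hderiv z (hsub (Ioo_subset_Icc_self hz))).mul
      (key_deriv ht0 (hderiv z (hsub (Ioo_subset_Icc_self hz)))
        (lt_trans (hsup z (hsub (Ioo_subset_Icc_self hz))) hαstar)))
  have hξT : ξ ∈ Icc (0:ℝ) T := hsub (Ioo_subset_Icc_self hξ)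
  -- rewrite D t = Q t t - slope
  have hDeq : (t ^ (-(α t)) / Real.Gamma (1 - α t)) *
        (-(α' t) * Real.log t - α t / t + psiGamma (1 - α t) * α' t) -
        (-(α 0)) * t ^ (-(α 0) - 1) / Real.Gamma (1 - α 0)
      = (t ^ (-(α t)) / Real.Gamma (1 - α t)) *
          (-(α' t) * Real.log t + psiGamma (1 - α t) * α' t) -
        (α t * (t ^ (-(α t)) / Real.Gamma (1 - α t)) -
         α 0 * (t ^ (-(α 0)) / Real.Gamma (1 - α 0))) / (t - 0) := by
    rw [Real.rpow_sub_one ht0.ne' (-(α 0)), sub_zero]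
    ring
  rw [hDeq, ← hslope]
  -- now bound |Q t t - H' ξ|
  have hb1 : |(t ^ (-(α t)) / Real.Gamma (1 - α t)) *
      (-(α' t) * Real.log t + psiGamma (1 - α t) * α' t)| ≤ K₁ * (CL * t ^ (-αstar)) :=
    hQb t ht t htT
  have hb2 : |α' ξ * (t ^ (-(α ξ)) / Real.Gamma (1 - α ξ))| ≤ M * B₁ * CL * t ^ (-αstar) := by
    rw [abs_mul]
    have hp : 0 < t ^ (-(α ξ)) / Real.Gamma (1 - α ξ) :=
      div_pos (Real.rpow_pos_of_pos ht0 _) (hΓpos ξ hξT)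
    rw [abs_of_pos hp]
    have h1 : t ^ (-(α ξ)) / Real.Gamma (1 - α ξ) ≤ B₁ * t ^ (-(α ξ)) := hPb t ht ξ hξT
    have h2 : t ^ (-(α ξ)) ≤ t ^ (-(α ξ)) * (1 + |Real.log t|) := by
      nlinarith [abs_nonneg (Real.log t), (Real.rpow_pos_of_pos ht0 (-(α ξ))).le]
    have h3 : t ^ (-(α ξ)) * (1 + |Real.log t|) ≤ CL * t ^ (-αstar) := hLb t ht ξ hξT
    calc |α' ξ| * (t ^ (-(α ξ)) / Real.Gamma (1 - α ξ))
        ≤ M * (B₁ * t ^ (-(α ξ))) :=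
          mul_le_mul (hM ξ hξT) h1 hp.le hM0
      _ ≤ M * (B₁ * (CL * t ^ (-αstar))) := by
          refine mul_le_mul_of_nonneg_left (mul_le_mul_of_nonneg_left (h2.trans h3) hB₁0) hM0
      _ = M * B₁ * CL * t ^ (-αstar) := by ring
  have hb3 : |α ξ * ((t ^ (-(α ξ)) / Real.Gamma (1 - α ξ)) *
      (-(α' ξ) * Real.log t + psiGamma (1 - α ξ) * α' ξ))| ≤ K₁ * (CL * t ^ (-αstar)) := by
    rw [abs_mul]
    have hα1 : |α ξ| ≤ 1 := by
      rw [abs_of_pos (hpos ξ hξT)]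
      linarith [hsup ξ hξT]
    calc |α ξ| * |(t ^ (-(α ξ)) / Real.Gamma (1 - α ξ)) *
        (-(α' ξ) * Real.log t + psiGamma (1 - α ξ) * α' ξ)|
        ≤ 1 * (K₁ * (CL * t ^ (-αstar))) :=
          mul_le_mul hα1 (hQb t ht ξ hξT) (abs_nonneg _)  zero_le_one
      _ = K₁ * (CL * t ^ (-αstar)) := one_mul _
  have htp : 0 < t ^ (-αstar) := Real.rpow_pos_of_pos ht0 _
  calc |(t ^ (-(α t)) / Real.Gamma (1 - α t)) *
      (-(α' t) * Real.log t + psiGamma (1 - α t) * α' t) -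
      (α' ξ * (t ^ (-(α ξ)) / Real.Gamma (1 - α ξ)) +
        α ξ * ((t ^ (-(α ξ)) / Real.Gamma (1 - α ξ)) *
          (-(α' ξ) * Real.log t + psiGamma (1 - α ξ) * α' ξ)))|
      ≤ |(t ^ (-(α t)) / Real.Gamma (1 - α t)) *
          (-(α' t) * Real.log t + psiGamma (1 - α t) * α' t)| +
        (|α' ξ * (t ^ (-(α ξ)) / Real.Gamma (1 - α ξ))| +
         |α ξ * ((t ^ (-(α ξ)) / Real.Gamma (1 - α ξ)) *
           (-(α' ξ) * Real.log t + psiGamma (1 - α ξ) * α' ξ))|) :=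
        (abs_sub _ _).trans (by gcongr; exact abs_add_le _ _)
    _ ≤ K₁ * (CL * t ^ (-αstar)) + (M * B₁ * CL * t ^ (-αstar) + K₁ * (CL * t ^ (-αstar))) := by
        gcongr
    _ ≤ (K₁ * CL + M * B₁ * CL + K₁ * CL + 1) * t ^ (-αstar) := by nlinarith [htp]
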